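/- Let A ∈ M_n(ℝ) with n odd. Then A is nonsingular with A^{-1} a bdsw Z-matrix and A < 0 entrywise (so A^{-1} is an N-matrix) if and only if A < 0 entrywise, A has the inverse cyclic property, and d - c > 0. -/

import Mathlib

open Matrix Finset

/-- A matrix (of order ≥ 2) has the *inverse cyclic property* if all its diagonal
entries are nonzero and the three cyclic entry conditions hold. -/
def InvCyclic {n : ℕ} (A : Matrix (Fin (n + 2)) (Fin (n + 2)) ℝ) : Prop :=
  (∀ i, A i i ≠ 0) ∧
  (∀ i k j : Fin (n + 2), i < k → k < j → A i j = A i k * A k j / A k k) ∧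
  (∀ i j : Fin (n + 2), j < i → i ≠ Fin.last (n + 1) →
    A i j = A i (Fin.last (n + 1)) * A (Fin.last (n + 1)) j /
      A (Fin.last (n + 1)) (Fin.last (n + 1))) ∧
  (∀ j : Fin (n + 2), j < Fin.last (n + 1) →
    A (Fin.last (n + 1)) j = A (Fin.last (n + 1)) 0 * A 0 j / A 0 0)

/-- `d`, the product of the diagonal entries. -/
def diagProd {n : ℕ} (A : Matrix (Fin (n + 2)) (Fin (n + 2)) ℝ) : ℝ := ∏ i, A i i

/-- `c`, the cyclic product `a₁₂a₂₃⋯a_{(n-1)n}a_{n1}`. -/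
def cycProd {n : ℕ} (A : Matrix (Fin (n + 2)) (Fin (n + 2)) ℝ) : ℝ :=
  ∏ i : Fin (n + 2), A i (i + 1)
/-- A *bi-diagonal south-west* (bdsw) matrix: the diagonal, the super diagonal and the
south-west corner entry are nonzero, and all other entries are zero. -/
def Bdsw {n : ℕ} (B : Matrix (Fin (n + 2)) (Fin (n + 2)) ℝ) : Prop :=
  (∀ i, B i i ≠ 0) ∧
  (∀ i j : Fin (n + 2), (j : ℕ) = (i : ℕ) + 1 → B i j ≠ 0) ∧
  (B (Fin.last (n + 1)) 0 ≠ 0) ∧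
  (∀ i j : Fin (n + 2), i ≠ j → (j : ℕ) ≠ (i : ℕ) + 1 →
    ¬(i = Fin.last (n + 1) ∧ j = 0) → B i j = 0)




open Fin.NatCast

section helpers
variable {n : ℕ}

lemma lastcast : ((n+1 : ℕ) : Fin (n+2)) = Fin.last (n+1) := by
  ext; rw [Fin.val_cast_of_lt (by omega)]; simp

lemma zsub1 : (0 - 1 : Fin (n+2)) = Fin.last (n+1) := by
  ext; rw [Fin.coe_sub_one]; simp

lemma sub1val {j : Fin (n+2)} (hj : j ≠ 0) : ((j - 1 : Fin (n+2)) : ℕ) = (j : ℕ) - 1 := by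
  rw [Fin.coe_sub_one, if_neg hj]

lemma sub1ne (j : Fin (n+2)) : j - 1 ≠ j := by
  intro h
  rcases eq_or_ne j 0 with rfl | hj
  · rw [zsub1] at h; exact absurd (congrArg Fin.val h) (by simp)
  · have := congrArg Fin.val h
    rw [sub1val hj] at this
    have : (j:ℕ) ≠ 0 := fun h0 => hj (Fin.ext h0)
    omega

lemma collapse (A B : Matrix (Fin (n+2)) (Fin (n+2)) ℝ) (i j : Fin (n+2))
    (hz : ∀ k, k ≠ j - 1 → k ≠ j → B k j = 0) :
    (A * B) i j = A i (j-1) * B (j-1) j + A i j * B j j := by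
  rw [Matrix.mul_apply,
    ← Finset.sum_subset (Finset.subset_univ ({j-1, j} : Finset (Fin (n+2))))]
  · rw [Finset.sum_pair (sub1ne j)]
  · intro k _ hk
    simp only [Finset.mem_insert, Finset.mem_singleton, not_or] at hk
    rw [hz k hk.1 hk.2, mul_zero]

lemma dNeg (hn : Odd (n+2)) {A : Matrix (Fin (n+2)) (Fin (n+2)) ℝ}
    (hneg : ∀ i j, A i j < 0) : diagProd A < 0 := by
  have h1 : diagProd A = (-1)^(n+2) * ∏ i : Fin (n+2), (-(A i i)) := by
    have : ∀ i : Fin (n+2), A i i = (-1) * (-(A i i)) := fun i => by ring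
    rw [diagProd, Finset.prod_congr rfl (fun i _ => this i), Finset.prod_mul_distrib,
      Finset.prod_const, Finset.card_univ, Fintype.card_fin]
  rw [h1, Odd.neg_one_pow hn]
  have : (0:ℝ) < ∏ i : Fin (n+2), (-(A i i)) :=
    Finset.prod_pos (fun i _ => by linarith [hneg i i])
  linarith

end helpers
section cyclemmas
variable {n : ℕ} {A : Matrix (Fin (n+2)) (Fin (n+2)) ℝ}

lemma castlt {a b : ℕ} (hab : a < b) (hb : b < n+2) : (a : Fin (n+2)) < (b : Fin (n+2)) := by
  rw [Fin.lt_def, Fin.val_cast_of_lt (by omega), Fin.val_cast_of_lt hb]; exact hab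

lemma Uprime (hic : InvCyclic A) (a : ℕ) : ∀ b : ℕ, a ≤ b → b ≤ n+1 →
    A (a : Fin (n+2)) (b : Fin (n+2)) * ∏ m ∈ Finset.Ico a b, A (m : Fin (n+2)) (m : Fin (n+2))
      = A (a : Fin (n+2)) (a : Fin (n+2)) *
        ∏ m ∈ Finset.Ico a b, A (m : Fin (n+2)) ((m+1 : ℕ) : Fin (n+2)) := by
  intro b
  induction b with
  | zero =>
    intro hab _
    have : a = 0 := by omega
    subst this; simp
  | succ b ih =>
    intro hab hb
    rcases eq_or_lt_of_le hab with h | h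
    · subst h; simp
    · have hab' : a ≤ b := by omega
      rw [Finset.prod_Ico_succ_top hab', Finset.prod_Ico_succ_top hab']
      rcases eq_or_lt_of_le hab' with h2 | h2
      · subst h2; simp; ring
      · have hkey := hic.2.1 (a : Fin (n+2)) (b : Fin (n+2)) ((b+1 : ℕ) : Fin (n+2))
          (castlt h2 (by omega)) (castlt (by omega) (by omega))
        have hbb : A (b : Fin (n+2)) (b : Fin (n+2)) ≠ 0 := hic.1 _
        have ih' := ih hab' (by omega)
        rw [hkey, div_mul_eq_mul_div, div_eq_iff hbb]
        push_cast at ih' ⊢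
        linear_combination (A (b:Fin (n+2)) ((b:Fin (n+2))+1) * A (b:Fin (n+2)) (b:Fin (n+2))) * ih'

lemma dEq : diagProd A = ∏ m ∈ Finset.range (n+2), A (m : Fin (n+2)) (m : Fin (n+2)) := by
  rw [diagProd, ← Fin.prod_univ_eq_prod_range (fun m => A (m : Fin (n+2)) (m : Fin (n+2))) (n+2)]
  simp [Fin.cast_val_eq_self]

lemma cEq : cycProd A = ∏ m ∈ Finset.range (n+2),
    A (m : Fin (n+2)) ((m+1 : ℕ) : Fin (n+2)) := by
  rw [cycProd, ← Fin.prod_univ_eq_prod_range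
    (fun m => A (m : Fin (n+2)) ((m+1 : ℕ) : Fin (n+2))) (n+2)]
  apply Finset.prod_congr rfl
  intro i _
  push_cast
  rfl

lemma dSplit : diagProd A = (∏ m ∈ Finset.Ico 0 (n+1), A (m : Fin (n+2)) (m : Fin (n+2))) *
    A (Fin.last (n+1)) (Fin.last (n+1)) := by
  rw [dEq]
  rw [show Finset.range (n+2) = Finset.Ico 0 (n+2) by rw [Finset.range_eq_Ico]]
  rw [Finset.prod_Ico_succ_top (by omega), lastcast]

lemma cSplit : cycProd A = (∏ m ∈ Finset.Ico 0 (n+1),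
    A (m : Fin (n+2)) ((m+1 : ℕ) : Fin (n+2))) * A (Fin.last (n+1)) 0 := by
  rw [cEq]
  rw [show Finset.range (n+2) = Finset.Ico 0 (n+2) by rw [Finset.range_eq_Ico]]
  rw [Finset.prod_Ico_succ_top (by omega), lastcast]
  norm_num [Fin.natCast_self]

lemma Lw (hic : InvCyclic A) (i j : Fin (n+2)) (hji : j < i) :
    A i j * (A (Fin.last (n+1)) (Fin.last (n+1)) * A 0 0) =
    A i (Fin.last (n+1)) * (A (Fin.last (n+1)) 0 * A 0 j) := by
  have h00 : A 0 0 ≠ 0 := hic.1 0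
  have hll : A (Fin.last (n+1)) (Fin.last (n+1)) ≠ 0 := hic.1 _
  rcases eq_or_ne i (Fin.last (n+1)) with rfl | hi
  · rw [hic.2.2.2 j hji]
    field_simp
  · have hil : i < Fin.last (n+1) := lt_of_le_of_ne (Fin.le_last i) hi
    have hjl : j < Fin.last (n+1) := lt_trans hji hil
    rw [hic.2.2.1 i j hji hi, hic.2.2.2 j hjl]
    field_simp
    try ring
    try exact Or.inl trivial
end cyclemmas
section cyclemmas2
variable {n : ℕ} {A : Matrix (Fin (n+2)) (Fin (n+2)) ℝ}

lemma pairCyc (hic : InvCyclic A) (j : Fin (n+2)) :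
    A j (j-1) * A (j-1) j * diagProd A =
      cycProd A * (A j j * A (j-1) (j-1)) := by
  have h00 : A 0 0 ≠ 0 := hic.1 0
  rcases eq_or_ne j 0 with rfl | hj
  · rw [zsub1]
    have hU := Uprime hic 0 (n+1) (by omega) (le_refl _)
    rw [show ((0:ℕ) : Fin (n+2)) = 0 by simp, lastcast] at hU
    linear_combination (A 0 (Fin.last (n+1)) * A (Fin.last (n+1)) 0) * (dSplit (A := A))
      + (- (A 0 0 * A (Fin.last (n+1)) (Fin.last (n+1)))) * (cSplit (A := A))
      + (A (Fin.last (n+1)) 0 * A (Fin.last (n+1)) (Fin.last (n+1))) * hU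
  · set jv := (j : ℕ) with hjv
    have hjv1 : 1 ≤ jv := by
      rcases Nat.eq_zero_or_pos jv with h | h
      · exact absurd (Fin.ext h) hj
      · exact h
    have hjn : jv ≤ n+1 := by omega
    set pv := jv - 1 with hpv
    have hcastj : ((jv : ℕ) : Fin (n+2)) = j := Fin.cast_val_eq_self j
    have hcastp : ((pv : ℕ) : Fin (n+2)) = j - 1 := by
      ext
      rw [Fin.val_cast_of_lt (by omega), sub1val hj]
    have hU1 := Uprime hic jv (n+1) hjn (le_refl _)
    have hU2 := Uprime hic 0 pv (by omega) (by omega)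
    have hU3 := Uprime hic pv jv (by omega) (by omega)
    rw [hcastj, lastcast] at hU1
    rw [show ((0:ℕ) : Fin (n+2)) = 0 by simp, hcastp] at hU2
    rw [hcastp, hcastj] at hU3
    have hpj : j - 1 < j := by
      rw [Fin.lt_def, sub1val hj]; omega
    have hLw := Lw hic j (j-1) hpj
    have hdgj : (∏ m ∈ Finset.Ico 0 pv, A (m : Fin (n+2)) (m : Fin (n+2))) *
        (∏ m ∈ Finset.Ico pv jv, A (m : Fin (n+2)) (m : Fin (n+2))) *
        (∏ m ∈ Finset.Ico jv (n+1), A (m : Fin (n+2)) (m : Fin (n+2))) =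
        ∏ m ∈ Finset.Ico 0 (n+1), A (m : Fin (n+2)) (m : Fin (n+2)) := by
      rw [Finset.prod_Ico_consecutive _ (by omega : 0 ≤ pv) (by omega : pv ≤ jv),
        Finset.prod_Ico_consecutive _ (by omega : 0 ≤ jv) hjn]
    have hsj : (∏ m ∈ Finset.Ico 0 pv, A (m : Fin (n+2)) ((m+1:ℕ) : Fin (n+2))) *
        (∏ m ∈ Finset.Ico pv jv, A (m : Fin (n+2)) ((m+1:ℕ) : Fin (n+2))) *
        (∏ m ∈ Finset.Ico jv (n+1), A (m : Fin (n+2)) ((m+1:ℕ) : Fin (n+2))) =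
        ∏ m ∈ Finset.Ico 0 (n+1), A (m : Fin (n+2)) ((m+1:ℕ) : Fin (n+2)) := by
      rw [Finset.prod_Ico_consecutive _ (by omega : 0 ≤ pv) (by omega : pv ≤ jv),
        Finset.prod_Ico_consecutive _ (by omega : 0 ≤ jv) hjn]
    set X := A j (j-1)
    set Y := A (j-1) j
    set Z := A 0 (j-1)
    set Ajl := A j (Fin.last (n+1))
    set Al0 := A (Fin.last (n+1)) 0
    set All := A (Fin.last (n+1)) (Fin.last (n+1))
    set Ajj := A j j
    set App := A (j-1) (j-1)
    set D1 := ∏ m ∈ Finset.Ico 0 pv, A (m : Fin (n+2)) (m : Fin (n+2))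
    set D2 := ∏ m ∈ Finset.Ico pv jv, A (m : Fin (n+2)) (m : Fin (n+2))
    set D3 := ∏ m ∈ Finset.Ico jv (n+1), A (m : Fin (n+2)) (m : Fin (n+2))
    set S1 := ∏ m ∈ Finset.Ico 0 pv, A (m : Fin (n+2)) ((m+1:ℕ) : Fin (n+2))
    set S2 := ∏ m ∈ Finset.Ico pv jv, A (m : Fin (n+2)) ((m+1:ℕ) : Fin (n+2))
    set S3 := ∏ m ∈ Finset.Ico jv (n+1), A (m : Fin (n+2)) ((m+1:ℕ) : Fin (n+2))
    have hd : diagProd A = D1 * D2 * D3 * All := by rw [dSplit, ← hdgj]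
    have hc : cycProd A = S1 * S2 * S3 * Al0 := by rw [cSplit, ← hsj]
    have key : (X * Y * diagProd A) * A 0 0 = (cycProd A * (Ajj * App)) * A 0 0 := by
      linear_combination (X * Y * A 0 0) * hd + (-(Ajj * App * A 0 0)) * hc
        + (Y * D1 * D2 * D3) * hLw + (Al0 * Z * Y * D1 * D2) * hU1
        + (Al0 * Ajj * S3 * Y * D2) * hU2 + (Al0 * Ajj * S3 * A 0 0 * S1) * hU3
    exact mul_right_cancel₀ h00 key

lemma stepRel (hic : InvCyclic A) (hne : ∀ i j, A i j ≠ 0) (i j : Fin (n+2)) (hij : i ≠ j) :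
    A i j * A (j-1) (j-1) = A i (j-1) * A (j-1) j := by
  have h00 : A 0 0 ≠ 0 := hic.1 0
  have hll : A (Fin.last (n+1)) (Fin.last (n+1)) ≠ 0 := hic.1 _
  rcases eq_or_ne j 0 with rfl | hj
  · rw [zsub1]
    rcases eq_or_ne i (Fin.last (n+1)) with rfl | hi
    · ring
    · have hi0 : (0 : Fin (n+2)) < i := Fin.pos_iff_ne_zero.mpr hij
      rw [hic.2.2.1 i 0 hi0 hi, div_mul_cancel₀ _ hll]
  · have hpj : j - 1 < j := by
      rw [Fin.lt_def, sub1val hj]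
      have : (j:ℕ) ≠ 0 := fun h0 => hj (Fin.ext h0)
      omega
    rcases lt_trichotomy i (j-1) with hip | hip | hip
    · rw [hic.2.1 i (j-1) j hip hpj, div_mul_cancel₀ _ (hic.1 (j-1))]
    · subst hip; ring
    · have hji : j < i := by
        rw [Fin.lt_def] at hip ⊢
        rw [sub1val hj] at hip
        have hj' : (j:ℕ) ≠ 0 := fun h0 => hj (Fin.ext h0)
        have : (i:ℕ) ≠ (j:ℕ) := fun h0 => hij (Fin.ext h0)
        omega
      have hLw1 := Lw hic i j hji
      have hLw2 := Lw hic i (j-1) (lt_trans hpj hji)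
      rcases eq_or_ne (j-1) 0 with hp0 | hp0
      · rw [hp0] at hLw2 ⊢
        have key : (A i j * A 0 0) * (A (Fin.last (n+1)) (Fin.last (n+1)) * A 0 0) =
            (A i 0 * A 0 j) * (A (Fin.last (n+1)) (Fin.last (n+1)) * A 0 0) := by
          linear_combination (A 0 0) * hLw1 + (-(A 0 j)) * hLw2
        exact mul_right_cancel₀ (mul_ne_zero hll h00) key
      · have hp0' : (0 : Fin (n+2)) < j - 1 := Fin.pos_iff_ne_zero.mpr hp0
        have h3 : A 0 j * A (j-1) (j-1) = A 0 (j-1) * A (j-1) j := by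
          rw [hic.2.1 0 (j-1) j hp0' hpj, div_mul_cancel₀ _ (hic.1 (j-1))]
        have key : (A i j * A (j-1) (j-1)) *
            (A (Fin.last (n+1)) (Fin.last (n+1)) * A 0 0 * A 0 (j-1)) =
            (A i (j-1) * A (j-1) j) *
            (A (Fin.last (n+1)) (Fin.last (n+1)) * A 0 0 * A 0 (j-1)) := by
          linear_combination (A (j-1) (j-1) * A 0 (j-1)) * hLw1
            + (A i (Fin.last (n+1)) * A (Fin.last (n+1)) 0 * A 0 (j-1)) * h3
            + (-(A (j-1) j * A 0 (j-1))) * hLw2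
        exact mul_right_cancel₀ (mul_ne_zero (mul_ne_zero hll h00) (hne 0 (j-1))) key
end cyclemmas2
section fwd
variable {n : ℕ} {A : Matrix (Fin (n+2)) (Fin (n+2)) ℝ}

lemma lastne0 : (Fin.last (n+1) : Fin (n+2)) ≠ 0 := by
  intro h
  have := congrArg Fin.val h
  simp at this

lemma forwardDir (hn : Odd (n+2)) (hdet : A.det ≠ 0) (hZ : ∀ i j, i ≠ j → A⁻¹ i j ≤ 0)
    (hneg : ∀ i j, A i j < 0) (hB : Bdsw A⁻¹) :
    InvCyclic A ∧ 0 < diagProd A - cycProd A := by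
  set B := A⁻¹ with hBdef
  have hAB : A * B = 1 := Matrix.mul_nonsing_inv A (isUnit_iff_ne_zero.mpr hdet)
  have hz : ∀ j k : Fin (n+2), k ≠ j - 1 → k ≠ j → B k j = 0 := by
    intro j k hk1 hk2
    apply hB.2.2.2 k j hk2
    · intro hval
      have hj0 : j ≠ 0 := by
        intro h; subst h; simp at hval
      apply hk1
      ext
      rw [sub1val hj0, hval]
      omega
    · rintro ⟨rfl, rfl⟩
      exact hk1 zsub1.symm
  have hcol : ∀ i j, A i (j-1) * B (j-1) j + A i j * B j j = if i = j then 1 else 0 := by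
    intro i j
    rw [← collapse A B i j (hz j), hAB, Matrix.one_apply]
  have hBjj : ∀ j, B j j ≠ 0 := hB.1
  have hrec : ∀ i j, i ≠ j → A i j * B j j = -(B (j-1) j) * A i (j-1) := by
    intro i j hij
    have h := hcol i j
    rw [if_neg hij] at h
    linear_combination h
  -- prodRel
  have hpr : ∀ (i k : Fin (n+2)) (b : ℕ), (i:ℕ) ≤ (k:ℕ) → (k:ℕ) < b → b ≤ n+1 →
      A i (b : Fin (n+2)) * A k k = A i k * A k (b : Fin (n+2)) := by
    intro i k b
    induction b with
    | zero => omega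
    | succ b ih =>
      intro hik hkb hb
      have hne1 : ∀ m : Fin (n+2), (m:ℕ) ≤ b → m ≠ ((b+1 : ℕ) : Fin (n+2)) := by
        intro m hm heq
        have := congrArg Fin.val heq
        rw [Fin.val_cast_of_lt (by omega)] at this
        omega
      have hb1ne0 : ((b+1:ℕ) : Fin (n+2)) ≠ 0 := by
        intro h
        have := congrArg Fin.val h
        rw [Fin.val_cast_of_lt (by omega)] at this
        simp at this
      have hsub : (((b+1:ℕ) : Fin (n+2)) - 1) = (b : Fin (n+2)) := by
        ext
        rw [sub1val hb1ne0, Fin.val_cast_of_lt (by omega), Fin.val_cast_of_lt (by omega)]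
        omega
      have ei := hrec i ((b+1:ℕ) : Fin (n+2)) (hne1 i (by omega))
      have ek := hrec k ((b+1:ℕ) : Fin (n+2)) (hne1 k (by omega))
      rw [hsub] at ei ek
      rcases eq_or_lt_of_le (Nat.lt_succ_iff.mp hkb) with h2 | h2
      · have hbk : (b : Fin (n+2)) = k := by
          ext; rw [Fin.val_cast_of_lt (by omega)]; omega
        rw [hbk] at ei ek
        have key : (A i ((b+1:ℕ) : Fin (n+2)) * A k k) * B ((b+1:ℕ) : Fin (n+2)) ((b+1:ℕ) : Fin (n+2))
            = (A i k * A k ((b+1:ℕ) : Fin (n+2))) * B ((b+1:ℕ) : Fin (n+2)) ((b+1:ℕ) : Fin (n+2)) := by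
          linear_combination (A k k) * ei + (-(A i k)) * ek
        exact mul_right_cancel₀ (hBjj _) key
      · have ih' := ih hik h2 (by omega)
        have key : (A i ((b+1:ℕ) : Fin (n+2)) * A k k) * B ((b+1:ℕ) : Fin (n+2)) ((b+1:ℕ) : Fin (n+2))
            = (A i k * A k ((b+1:ℕ) : Fin (n+2))) * B ((b+1:ℕ) : Fin (n+2)) ((b+1:ℕ) : Fin (n+2)) := by
          linear_combination (A k k) * ei + (-(B ((b:ℕ) : Fin (n+2)) ((b+1:ℕ) : Fin (n+2)))) * ih'
            + (-(A i k)) * ek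
        exact mul_right_cancel₀ (hBjj _) key
  -- Q chain to column 0
  have hQ : ∀ b : ℕ, b ≤ n+1 → ∀ i i' : Fin (n+2),
      (∀ m:ℕ, 1 ≤ m → m ≤ b → (i:ℕ) ≠ m) → (∀ m:ℕ, 1 ≤ m → m ≤ b → (i':ℕ) ≠ m) →
      A i (b : Fin (n+2)) * A i' 0 = A i' (b : Fin (n+2)) * A i 0 := by
    intro b
    induction b with
    | zero =>
      intro _ i i' _ _
      norm_num
      ring
    | succ b ih =>
      intro hb i i' hi hi'
      have hine : i ≠ ((b+1:ℕ) : Fin (n+2)) := by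
        intro heq
        exact hi (b+1) (by omega) le_rfl (by rw [heq, Fin.val_cast_of_lt (by omega)])
      have hi'ne : i' ≠ ((b+1:ℕ) : Fin (n+2)) := by
        intro heq
        exact hi' (b+1) (by omega) le_rfl (by rw [heq, Fin.val_cast_of_lt (by omega)])
      have hb1ne0 : ((b+1:ℕ) : Fin (n+2)) ≠ 0 := by
        intro h
        have := congrArg Fin.val h
        rw [Fin.val_cast_of_lt (by omega)] at this
        simp at this
      have hsub : (((b+1:ℕ) : Fin (n+2)) - 1) = (b : Fin (n+2)) := by
        ext
        rw [sub1val hb1ne0, Fin.val_cast_of_lt (by omega), Fin.val_cast_of_lt (by omega)]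
        omega
      have ei := hrec i ((b+1:ℕ) : Fin (n+2)) hine
      have ei' := hrec i' ((b+1:ℕ) : Fin (n+2)) hi'ne
      rw [hsub] at ei ei'
      have ih' := ih (by omega) i i' (fun m h1 h2 => hi m h1 (by omega))
        (fun m h1 h2 => hi' m h1 (by omega))
      have key : (A i ((b+1:ℕ) : Fin (n+2)) * A i' 0) * B ((b+1:ℕ) : Fin (n+2)) ((b+1:ℕ) : Fin (n+2))
          = (A i' ((b+1:ℕ) : Fin (n+2)) * A i 0) * B ((b+1:ℕ) : Fin (n+2)) ((b+1:ℕ) : Fin (n+2)) := by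
        linear_combination (A i' 0) * ei + (-(B ((b:ℕ) : Fin (n+2)) ((b+1:ℕ) : Fin (n+2)))) * ih'
          + (-(A i 0)) * ei'
      exact mul_right_cancel₀ (hBjj _) key
  -- wrap
  have hw : ∀ i : Fin (n+2), i ≠ 0 →
      A i 0 * A (Fin.last (n+1)) (Fin.last (n+1)) = A i (Fin.last (n+1)) * A (Fin.last (n+1)) 0 := by
    intro i hi
    have e1 := hrec i 0 hi
    have e2 := hrec (Fin.last (n+1)) 0 lastne0
    rw [zsub1] at e1 e2
    have key : (A i 0 * A (Fin.last (n+1)) (Fin.last (n+1))) * B 0 0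
        = (A i (Fin.last (n+1)) * A (Fin.last (n+1)) 0) * B 0 0 := by
      linear_combination (A (Fin.last (n+1)) (Fin.last (n+1))) * e1
        + (-(A i (Fin.last (n+1)))) * e2
    exact mul_right_cancel₀ (hBjj 0) key
  -- InvCyclic
  have hic : InvCyclic A := by
    refine ⟨fun i => ne_of_lt (hneg i i), ?_, ?_, ?_⟩
    · intro i k j hik hkj
      have h := hpr i k (j:ℕ) (le_of_lt (Fin.lt_def.mp hik)) (Fin.lt_def.mp hkj) (by omega)
      rw [Fin.cast_val_eq_self] at h
      rw [eq_div_iff (ne_of_lt (hneg k k))]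
      linear_combination h
    · intro i j hji hil
      have hQ1 := hQ (j:ℕ) (by omega) i (Fin.last (n+1))
        (fun m h1 h2 => by have := Fin.lt_def.mp hji; omega)
        (fun m h1 h2 => by
          have := Fin.lt_def.mp hji
          have hle : (i:ℕ) ≤ n+1 := by omega
          simp only [Fin.val_last]
          have hil' : (i:ℕ) ≠ n+1 := fun h => hil (Fin.ext (by simpa using h))
          omega)
      rw [Fin.cast_val_eq_self] at hQ1
      have hi0 : i ≠ 0 := by
        intro h
        subst h
        exact absurd hji (by simp [Fin.lt_def])
      have hw1 := hw i hi0
      rw [eq_div_iff (ne_of_lt (hneg (Fin.last (n+1)) (Fin.last (n+1))))]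
      have key : (A i j * A (Fin.last (n+1)) (Fin.last (n+1))) * A (Fin.last (n+1)) 0
          = (A i (Fin.last (n+1)) * A (Fin.last (n+1)) j) * A (Fin.last (n+1)) 0 := by
        linear_combination (A (Fin.last (n+1)) (Fin.last (n+1))) * hQ1
          + (A (Fin.last (n+1)) j) * hw1
      exact mul_right_cancel₀ (ne_of_lt (hneg (Fin.last (n+1)) 0)) key
    · intro j hjl
      have hQ2 := hQ (j:ℕ) (by omega) (Fin.last (n+1)) 0
        (fun m h1 h2 => by
          have := Fin.lt_def.mp hjl
          simp only [Fin.val_last]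
          omega)
        (fun m h1 h2 => by simp only [Fin.val_zero]; omega)
      rw [Fin.cast_val_eq_self] at hQ2
      rw [eq_div_iff (ne_of_lt (hneg 0 0))]
      linear_combination hQ2
  -- d - c > 0
  have hd : diagProd A < 0 := dNeg hn hneg
  have hpc := pairCyc hic 0
  rw [zsub1] at hpc
  have e1 := hcol 0 0
  rw [if_pos rfl, zsub1] at e1
  have e2 := hcol (Fin.last (n+1)) 0
  rw [if_neg lastne0, zsub1] at e2
  have hBl0 : B (Fin.last (n+1)) 0 < 0 :=
    lt_of_le_of_ne (hZ (Fin.last (n+1)) 0 lastne0) hB.2.2.1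
  have hB00 : 0 < B 0 0 := by
    nlinarith [mul_pos_of_neg_of_neg (hneg (Fin.last (n+1)) (Fin.last (n+1))) hBl0,
      hneg (Fin.last (n+1)) 0]
  have key : (B 0 0 * (A 0 0 * (diagProd A - cycProd A))) * A (Fin.last (n+1)) (Fin.last (n+1))
      = diagProd A * A (Fin.last (n+1)) (Fin.last (n+1)) := by
    linear_combination (A (Fin.last (n+1)) (Fin.last (n+1)) * diagProd A) * e1
      + (-(A 0 (Fin.last (n+1)) * diagProd A)) * e2 + (B 0 0) * hpc
  have key2 : B 0 0 * A 0 0 * (diagProd A - cycProd A) = diagProd A := by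
    have := mul_right_cancel₀ (ne_of_lt (hneg (Fin.last (n+1)) (Fin.last (n+1)))) key
    linear_combination this
  refine ⟨hic, ?_⟩
  nlinarith [mul_neg_of_pos_of_neg hB00 (hneg 0 0)]
end fwd
section bwd
variable {n : ℕ} {A : Matrix (Fin (n+2)) (Fin (n+2)) ℝ}

lemma backwardDir (hn : Odd (n+2)) (hneg : ∀ i j, A i j < 0) (hic : InvCyclic A)
    (hdc : 0 < diagProd A - cycProd A) :
    A.det ≠ 0 ∧ (∀ i j, i ≠ j → A⁻¹ i j ≤ 0) ∧ Bdsw A⁻¹ := by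
  have hd : diagProd A < 0 := dNeg hn hneg
  have hne : ∀ i j, A i j ≠ 0 := fun i j => ne_of_lt (hneg i j)
  set B : Matrix (Fin (n+2)) (Fin (n+2)) ℝ := Matrix.of fun i j =>
    if i = j then diagProd A / ((diagProd A - cycProd A) * A i i)
    else if ((j:ℕ) = (i:ℕ)+1 ∨ (i = Fin.last (n+1) ∧ j = 0)) then
      -(diagProd A * A i j) / ((diagProd A - cycProd A) * (A i i * A j j))
    else 0 with hBdef
  have hz : ∀ j k : Fin (n+2), k ≠ j - 1 → k ≠ j → B k j = 0 := by
    intro j k hk1 hk2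
    simp only [hBdef, Matrix.of_apply]
    rw [if_neg hk2, if_neg]
    rintro (hval | ⟨rfl, rfl⟩)
    · have hj0 : j ≠ 0 := by
        intro h; subst h; simp at hval
      apply hk1
      ext
      rw [sub1val hj0, hval]
      omega
    · exact hk1 zsub1.symm
  have hB1 : ∀ j, B (j-1) j =
      -(diagProd A * A (j-1) j) / ((diagProd A - cycProd A) * (A (j-1) (j-1) * A j j)) := by
    intro j
    simp only [hBdef, Matrix.of_apply]
    rw [if_neg (sub1ne j), if_pos]
    rcases eq_or_ne j 0 with rfl | hj
    · exact Or.inr ⟨zsub1, rfl⟩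
    · left
      rw [sub1val hj]
      have : (j:ℕ) ≠ 0 := fun h => hj (Fin.ext h)
      omega
  have hB2 : ∀ j, B j j = diagProd A / ((diagProd A - cycProd A) * A j j) := by
    intro j; simp [hBdef]
  have hDne : diagProd A - cycProd A ≠ 0 := ne_of_gt hdc
  have hAB : A * B = 1 := by
    ext i j
    rw [collapse A B i j (hz j), hB1 j, hB2 j, Matrix.one_apply]
    have hd1 : ((diagProd A - cycProd A) * (A (j-1) (j-1) * A j j)) ≠ 0 :=
      mul_ne_zero hDne (mul_ne_zero (hne _ _) (hne _ _))
    have hd2 : ((diagProd A - cycProd A) * A j j) ≠ 0 := mul_ne_zero hDne (hne _ _)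
    have e1 : -(diagProd A * A (j - 1) j) / ((diagProd A - cycProd A) * (A (j - 1) (j - 1) * A j j))
        * ((diagProd A - cycProd A) * (A (j - 1) (j - 1) * A j j)) = -(diagProd A * A (j - 1) j) :=
      div_mul_cancel₀ _ hd1
    have e2 : diagProd A / ((diagProd A - cycProd A) * A j j) * ((diagProd A - cycProd A) * A j j)
        = diagProd A := div_mul_cancel₀ _ hd2
    by_cases hij : i = j
    · subst hij
      rw [if_pos rfl]
      have hpc := pairCyc hic i
      apply mul_right_cancel₀ hd1
      linear_combination (A i (i-1)) * e1 + (A i i * A (i-1) (i-1)) * e2 + (-1 : ℝ) * hpc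
    · rw [if_neg hij]
      have hsr := stepRel hic hne i j hij
      apply mul_right_cancel₀ hd1
      linear_combination (A i (j-1)) * e1 + (A i j * A (j-1) (j-1)) * e2 + (diagProd A) * hsr
  have hInv : A⁻¹ = B := inv_eq_right_inv hAB
  have hdet : A.det ≠ 0 := by
    have := Matrix.isUnit_det_of_right_inverse hAB
    exact isUnit_iff_ne_zero.mp this
  refine ⟨hdet, ?_, ?_⟩
  · intro i j hij
    rw [hInv]
    simp only [hBdef, Matrix.of_apply]
    rw [if_neg hij]
    split_ifs with h
    · apply le_of_lt
      apply div_neg_of_neg_of_pos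
      · have : 0 < diagProd A * A i j := mul_pos_of_neg_of_neg hd (hneg i j)
        linarith
      · exact mul_pos hdc (mul_pos_of_neg_of_neg (hneg i i) (hneg j j))
    · exact le_refl 0
  · rw [hInv]
    refine ⟨?_, ?_, ?_, ?_⟩
    · intro i
      simp only [hBdef, Matrix.of_apply, if_pos rfl]
      exact div_ne_zero (ne_of_lt hd) (mul_ne_zero hDne (hne i i))
    · intro i j hval
      have hij : i ≠ j := by
        intro h; subst h; omega
      simp only [hBdef, Matrix.of_apply]
      rw [if_neg hij, if_pos (Or.inl hval)]
      apply div_ne_zero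
      · have : 0 < diagProd A * A i j := mul_pos_of_neg_of_neg hd (hneg i j)
        intro h; rw [neg_eq_zero] at h; linarith
      · exact mul_ne_zero hDne (mul_ne_zero (hne i i) (hne j j))
    · have hcorner : (((0 : Fin (n+2)) : ℕ) = ((Fin.last (n+1) : Fin (n+2)) : ℕ) + 1 ∨
          ((Fin.last (n+1) : Fin (n+2)) = Fin.last (n+1) ∧ (0 : Fin (n+2)) = 0)) :=
        Or.inr ⟨rfl, rfl⟩
      simp only [hBdef, Matrix.of_apply]
      rw [if_neg lastne0]
      simp only [and_self, or_true, if_true]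
      apply div_ne_zero
      · have : 0 < diagProd A * A (Fin.last (n+1)) 0 := mul_pos_of_neg_of_neg hd (hneg _ _)
        intro h; rw [neg_eq_zero] at h; linarith
      · exact mul_ne_zero hDne (mul_ne_zero (hne _ _) (hne _ _))
    · intro i j hij hval hcor
      simp only [hBdef, Matrix.of_apply]
      rw [if_neg hij, if_neg]
      rintro (h | h)
      · exact hval h
      · exact hcor h
end bwd

theorem stmt12 {n : ℕ} (hn : Odd (n + 2)) (A : Matrix (Fin (n + 2)) (Fin (n + 2)) ℝ) :
    (A.det ≠ 0 ∧ (∀ i j, i ≠ j → A⁻¹ i j ≤ 0) ∧ (∀ i j, A i j < 0) ∧ Bdsw A⁻¹) ↔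
    ((∀ i j, A i j < 0) ∧ InvCyclic A ∧ 0 < diagProd A - cycProd A) := by
  constructor
  · rintro ⟨hdet, hZ, hneg, hB⟩
    obtain ⟨hic, hdc⟩ := forwardDir hn hdet hZ hneg hB
    exact ⟨hneg, hic, hdc⟩
  · rintro ⟨hneg, hic, hdc⟩
    obtain ⟨h1, h2, h3⟩ := backwardDir hn hneg hic hdc
    exact ⟨h1, h2, hneg, h3⟩
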